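/- arXiv:2402.06082 — 2 statements merged into one kernel-verified Lean document; each statement's English description precedes it below -/
import Mathlib

section
/- Let C be a finite set of N vectors in R^d with pairwise distances at most 2δ, let q ∈ R^d with ||q||_2 ≤ r, and let S be a multiset of t i.i.d. uniform samples from C. If t ≥ 3 ε^{-2} e^{2δr} log(2/η), then with probability at least 1 - η, (N/t)·Σ_{k∈S} exp(⟨q,k⟩) lies within a multiplicative factor (1 ± ε) of Σ_{k∈C} exp(⟨q,k⟩). -/
open scoped RealInnerProductSpace
open MeasureTheory

lemma log_one_add_ge (x : ℝ) (hx : 0 ≤ x) : 2*x/(2+x) ≤ Real.log (1+x) := by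
  rcases eq_or_lt_of_le hx with h|h
  · simp [← h]
  set f : ℝ → ℝ := fun y => Real.log (1+y) - 2*y/(2+y) with hf
  have hder : ∀ y : ℝ, 0 ≤ y → HasDerivAt f (1/(1+y) - (2*(2+y) - 2*y*1)/(2+y)^2) y := by
    intro y hy
    have h1 : HasDerivAt (fun z : ℝ => 1 + z) 1 y := (hasDerivAt_id y).const_add 1
    have hlog : HasDerivAt (fun z : ℝ => Real.log (1+z)) (1/(1+y)) y := by
      simpa using h1.log (by positivity)
    have h2 : HasDerivAt (fun z : ℝ => 2*z) 2 y := by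
      simpa using (hasDerivAt_id y).const_mul 2
    have h3 : HasDerivAt (fun z : ℝ => 2+z) 1 y := (hasDerivAt_id y).const_add 2
    exact hlog.sub (h2.div h3 (by positivity))
  have hmono : MonotoneOn f (Set.Icc 0 x) := by
    apply monotoneOn_of_deriv_nonneg (convex_Icc 0 x)
    · intro y hy
      exact (hder y hy.1).continuousAt.continuousWithinAt
    · intro y hy
      rw [interior_Icc] at hy
      exact (hder y hy.1.le).differentiableAt.differentiableWithinAt
    · intro y hy
      rw [interior_Icc] at hy
      rw [(hder y hy.1.le).deriv]
      have h1 : (0:ℝ) < 1 + y := by linarith [hy.1]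
      have h2 : (0:ℝ) < 2 + y := by linarith [hy.1]
      rw [sub_nonneg, div_le_div_iff₀ (by positivity) (by positivity)]
      nlinarith [sq_nonneg y]
  have h0 : f 0 ≤ f x := hmono (Set.left_mem_Icc.2 hx) (Set.right_mem_Icc.2 hx) hx
  simp only [hf] at h0
  norm_num at h0
  linarith

lemma one_sub_mul_log (x : ℝ) (hx : 0 ≤ x) (hx1 : x < 1) :
    x^2/2 - x ≤ (1-x) * Real.log (1-x) := by
  rcases eq_or_lt_of_le hx with h|h
  · simp [← h]
  set f : ℝ → ℝ := fun y => (1-y) * Real.log (1-y) + y - y^2/2 with hf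
  have hder : ∀ y : ℝ, y < 1 → HasDerivAt f ((-1) * Real.log (1-y) + (1-y) * (-1/(1-y)) + 1 - (2*y/2)) y := by
    intro y hy
    have h1 : HasDerivAt (fun z : ℝ => 1 - z) (-1) y := by
      simpa using (hasDerivAt_id y).const_sub 1
    have hlog : HasDerivAt (fun z : ℝ => Real.log (1-z)) (-1/(1-y)) y := by
      simpa using h1.log (by intro hz; rw [sub_eq_zero] at hz; linarith)
    exact ((h1.mul hlog).add (hasDerivAt_id y)).sub
      (by simpa using ((hasDerivAt_pow 2 y).div_const 2))
  have hmono : MonotoneOn f (Set.Icc 0 x) := by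
    apply monotoneOn_of_deriv_nonneg (convex_Icc 0 x)
    · intro y hy
      exact (hder y (lt_of_le_of_lt hy.2 hx1)).continuousAt.continuousWithinAt
    · intro y hy
      rw [interior_Icc] at hy
      exact (hder y (by linarith [hy.2])).differentiableAt.differentiableWithinAt
    · intro y hy
      rw [interior_Icc] at hy
      have hy1 : y < 1 := by linarith [hy.2]
      rw [(hder y hy1).deriv]
      have h1 : (0:ℝ) < 1 - y := by linarith
      have hlog : Real.log (1-y) ≤ (1-y) - 1 := Real.log_le_sub_one_of_pos h1
      have h2 : (1-y) * (-1/(1-y)) = -1 := by field_simp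
      rw [h2]
      nlinarith [hy.1]
  have h0 : f 0 ≤ f x := hmono (Set.left_mem_Icc.2 hx) (Set.right_mem_Icc.2 hx) hx
  simp only [hf] at h0
  norm_num at h0
  linarith


lemma mul_log_lower (ε : ℝ) (h0 : 0 < ε) (h1 : ε < 1) :
    ε - (1+ε) * Real.log (1+ε) ≤ -(ε^2/3) := by
  have hL := log_one_add_ge ε h0.le
  have h2 : (0:ℝ) < 2 + ε := by linarith
  have h3 : (1+ε) * (2*ε/(2+ε)) ≤ (1+ε) * Real.log (1+ε) :=
    mul_le_mul_of_nonneg_left hL (by linarith)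
  have h4 : (1+ε) * (2*ε/(2+ε)) = 2*ε*(1+ε)/(2+ε) := by ring
  have h5 : ε^2/3 ≤ 2*ε*(1+ε)/(2+ε) - ε := by
    rw [le_sub_iff_add_le, ← sub_nonneg, div_sub' h2.ne']
    apply div_nonneg _ h2.le
    nlinarith
  linarith

lemma mul_log_lower' (ε : ℝ) (h0 : 0 < ε) (h1 : ε < 1) :
    -ε - (1-ε) * Real.log (1-ε) ≤ -(ε^2/3) := by
  have := one_sub_mul_log ε h0.le h1
  nlinarith

/-- Generic Chernoff/Markov bound for i.i.d. samples of a bounded nonnegative function. -/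
lemma chernoff_aux {α : Type*} [MeasurableSpace α] (ν : Measure α) [IsProbabilityMeasure ν]
    (t : ℕ) (g : α → ℝ) (hg : Measurable g) (B : ℝ) (hB : 0 < B)
    (hg0 : ∀ a, 0 ≤ g a) (hgB : ∀ a, g a ≤ B) (s τ : ℝ) :
    (Measure.pi fun _ : Fin t => ν) {x | Real.exp (s*τ) ≤ Real.exp (s * ∑ j, g (x j))} ≤
      ENNReal.ofReal (Real.exp ((t:ℝ) * ((∫ a, g a ∂ν) * (Real.exp (s*B) - 1)/B) - s*τ)) := by
  letI : MeasureSpace α := ⟨ν⟩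
  set m : ℝ := ∫ a, g a ∂ν with hm
  have hm0 : 0 ≤ m := integral_nonneg hg0
  -- pointwise convexity bound
  have hpt : ∀ a, Real.exp (s * g a) ≤ 1 + g a * ((Real.exp (s*B) - 1)/B) := by
    intro a
    have hθ0 : 0 ≤ g a / B := div_nonneg (hg0 a) hB.le
    have hθ1 : g a / B ≤ 1 := (div_le_one hB).2 (hgB a)
    have hcvx := convexOn_exp.2 (Set.mem_univ (0:ℝ)) (Set.mem_univ (s*B))
      (by linarith : (0:ℝ) ≤ 1 - g a / B) hθ0 (by ring)
    simp only [smul_eq_mul, mul_zero, Real.exp_zero] at hcvx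
    have harg : 0 + g a / B * (s * B) = s * g a := by field_simp; ring
    rw [harg] at hcvx
    calc Real.exp (s * g a) ≤ (1 - g a / B) * 1 + g a / B * Real.exp (s*B) := hcvx
    _ = 1 + g a * ((Real.exp (s*B) - 1)/B) := by field_simp; ring
  -- integrability of exp (s * g)
  have hgint : Integrable g ν := by
    apply Integrable.mono' (integrable_const B) hg.aestronglyMeasurable
    exact ae_of_all _ fun a => by rw [Real.norm_eq_abs, abs_of_nonneg (hg0 a)]; exact hgB a
  have hexpint : Integrable (fun a => Real.exp (s * g a)) ν := by
    apply Integrable.mono' (integrable_const (Real.exp (|s| * B)))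
      ((Real.measurable_exp.comp (hg.const_mul s)).aestronglyMeasurable)
    refine ae_of_all _ fun a => ?_
    simp only [Function.comp_apply, Real.norm_eq_abs]
    rw [abs_of_pos (Real.exp_pos _), Real.exp_le_exp]
    calc s * g a ≤ |s * g a| := le_abs_self _
    _ = |s| * |g a| := abs_mul s _
    _ ≤ |s| * B := by
        apply mul_le_mul_of_nonneg_left _ (abs_nonneg s)
        rw [abs_of_nonneg (hg0 a)]; exact hgB a
  -- one-sample mgf bound
  have hone : ∫ a, Real.exp (s * g a) ∂ν ≤ Real.exp (m * (Real.exp (s*B) - 1)/B) := by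
    calc ∫ a, Real.exp (s * g a) ∂ν
        ≤ ∫ a, 1 + g a * ((Real.exp (s*B) - 1)/B) ∂ν := by
          apply integral_mono hexpint _ hpt
          exact (integrable_const 1).add (hgint.mul_const _)
    _ = 1 + m * ((Real.exp (s*B) - 1)/B) := by
        rw [integral_add (integrable_const 1) (hgint.mul_const _), integral_const,
          integral_mul_const]
        simp [hm]
    _ ≤ Real.exp (m * ((Real.exp (s*B) - 1)/B)) := by
        rw [add_comm]; exact Real.add_one_le_exp _
    _ = Real.exp (m * (Real.exp (s*B) - 1)/B) := by ring_nf
  -- product integral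
  have hSmeas : Measurable fun x : Fin t → α => ∑ j, g (x j) :=
    Finset.measurable_sum Finset.univ fun j _ => hg.comp (measurable_pi_apply j)
  have hprod : ∫ x : Fin t → α, Real.exp (s * ∑ j, g (x j)) ∂(Measure.pi fun _ => ν)
      = (∫ a, Real.exp (s * g a) ∂ν) ^ t := by
    have : ∀ x : Fin t → α, Real.exp (s * ∑ j, g (x j)) = ∏ j, Real.exp (s * g (x j)) := by
      intro x; rw [← Real.exp_sum, Finset.mul_sum]
    simp_rw [this]
    have := MeasureTheory.integral_fintype_prod_eq_pow (ι := Fin t)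
      (fun a => Real.exp (s * g a)) (E := α) (μ := ν)
    simpa using this
  -- Markov
  have hPi : IsProbabilityMeasure (Measure.pi fun _ : Fin t => ν) := by infer_instance
  have hFint : Integrable (fun x : Fin t → α => Real.exp (s * ∑ j, g (x j)))
      (Measure.pi fun _ => ν) := by
    apply Integrable.mono' (integrable_const (Real.exp (|s| * (t * B))))
      ((Real.measurable_exp.comp (hSmeas.const_mul s)).aestronglyMeasurable)
    refine ae_of_all _ fun x => ?_
    simp only [Function.comp_apply, Real.norm_eq_abs]
    rw [abs_of_pos (Real.exp_pos _), Real.exp_le_exp]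
    have h1 : ∑ j, g (x j) ≤ (t:ℝ) * B := by
      calc ∑ j, g (x j) ≤ ∑ _j : Fin t, B := Finset.sum_le_sum fun j _ => hgB (x j)
      _ = (t:ℝ) * B := by simp [mul_comm]
    have h2 : 0 ≤ ∑ j, g (x j) := Finset.sum_nonneg fun j _ => hg0 (x j)
    calc s * ∑ j, g (x j) ≤ |s * ∑ j, g (x j)| := le_abs_self _
    _ = |s| * |∑ j, g (x j)| := abs_mul _ _
    _ ≤ |s| * ((t:ℝ) * B) := by
        apply mul_le_mul_of_nonneg_left _ (abs_nonneg s)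
        rw [abs_of_nonneg h2]; exact h1
  have hmarkov := mul_meas_ge_le_integral_of_nonneg
    (μ := Measure.pi fun _ : Fin t => ν)
    (f := fun x => Real.exp (s * ∑ j, g (x j)))
    (ae_of_all _ fun x => (Real.exp_pos _).le) hFint (Real.exp (s*τ))
  rw [hprod] at hmarkov
  have hpow : (∫ a, Real.exp (s * g a) ∂ν) ^ t ≤ Real.exp (m * (Real.exp (s*B) - 1)/B) ^ t :=
    pow_le_pow_left₀ (integral_nonneg fun a => (Real.exp_pos _).le) hone t
  rw [← Real.exp_nat_mul] at hpow
  set A := {x : Fin t → α | Real.exp (s*τ) ≤ Real.exp (s * ∑ j, g (x j))} with hA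
  have hne : (Measure.pi fun _ : Fin t => ν) A ≠ ⊤ := measure_ne_top _ _
  have hfin : ((Measure.pi fun _ : Fin t => ν) A).toReal
      ≤ Real.exp ((t:ℝ) * (m * (Real.exp (s*B) - 1)/B) - s*τ) := by
    have hthr : (0:ℝ) < Real.exp (s*τ) := Real.exp_pos _
    rw [Real.exp_sub]
    rw [le_div_iff₀ hthr]
    calc ((Measure.pi fun _ : Fin t => ν) A).toReal * Real.exp (s*τ)
        = Real.exp (s*τ) * ((Measure.pi fun _ : Fin t => ν) A).toReal := mul_comm _ _
    _ ≤ (∫ a, Real.exp (s * g a) ∂ν) ^ t := hmarkov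
    _ ≤ Real.exp ((t:ℝ) * (m * (Real.exp (s*B) - 1)/B)) := hpow
  calc (Measure.pi fun _ : Fin t => ν) A
      = ENNReal.ofReal (((Measure.pi fun _ : Fin t => ν) A).toReal) :=
        (ENNReal.ofReal_toReal hne).symm
  _ ≤ _ := ENNReal.ofReal_le_ofReal hfin

/-- Chernoff–Hoeffding estimate for the cluster partition-function sum: if `C` is a finite
set of vectors with pairwise distances at most `2δ`, `‖q‖ ≤ r`, and `S` consists of
`t ≥ 3 ε⁻² e^{2δr} log(2/η)` i.i.d. uniform samples from `C`, then with probability at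
least `1 - η` the scaled empirical sum `(|C|/t)·Σ_{j} exp⟨q, S j⟩` is within a
multiplicative factor `1 ± ε` of `Σ_{k ∈ C} exp⟨q, k⟩`. -/
theorem uniform_sampling_partition_function_estimate {d t : ℕ} (δ r ε η : ℝ)
    (hδ : 0 < δ) (hr : 0 < r) (hε : ε ∈ Set.Ioo (0 : ℝ) 1) (hη : η ∈ Set.Ioo (0 : ℝ) 1)
    (C : Finset (EuclideanSpace ℝ (Fin d))) (hC : C.Nonempty)
    (hdiam : ∀ k ∈ C, ∀ k' ∈ C, dist k k' ≤ 2 * δ)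
    (q : EuclideanSpace ℝ (Fin d)) (hq : ‖q‖ ≤ r)
    (ht : 3 * ε⁻¹ ^ 2 * Real.exp (2 * δ * r) * Real.log (2 / η) ≤ (t : ℝ)) :
    ENNReal.ofReal (1 - η) ≤
      (Measure.pi fun _ : Fin t => (PMF.uniformOfFinset C hC).toMeasure)
        {S : Fin t → EuclideanSpace ℝ (Fin d) |
          |((C.card : ℝ) / (t : ℝ)) * ∑ j, Real.exp ⟪q, S j⟫ -
              ∑ k ∈ C, Real.exp ⟪q, k⟫| ≤ ε * ∑ k ∈ C, Real.exp ⟪q, k⟫} := by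
  classical
  obtain ⟨ε0, ε1⟩ := hε
  obtain ⟨η0, η1⟩ := hη
  have hCne := hC
  obtain ⟨k₀, hk₀⟩ := hCne
  set ν := (PMF.uniformOfFinset C hC).toMeasure with hνdef
  haveI hνprob : IsProbabilityMeasure ν := PMF.toMeasure.isProbabilityMeasure _
  set P := Measure.pi fun _ : Fin t => ν with hPdef
  haveI hPprob : IsProbabilityMeasure P := by rw [hPdef]; infer_instance
  set N : ℝ := (C.card : ℝ) with hNdef
  have hN : 0 < N := by
    rw [hNdef]; exact_mod_cast Finset.card_pos.2 ⟨k₀, hk₀⟩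
  set Z : ℝ := ∑ k ∈ C, Real.exp ⟪q, k⟫ with hZdef
  have hZ : 0 < Z := Finset.sum_pos (fun k _ => Real.exp_pos _) ⟨k₀, hk₀⟩
  set μ0 : ℝ := Z / N with hμ0def
  have hμ0 : 0 < μ0 := div_pos hZ hN
  have hZN : Z = N * μ0 := by rw [hμ0def]; field_simp
  have hlog : 0 < Real.log (2 / η) := Real.log_pos (by rw [lt_div_iff₀ η0]; linarith)
  have hexp2 : (0:ℝ) < Real.exp (2 * δ * r) := Real.exp_pos _
  have htpos : (0:ℝ) < (t:ℝ) := lt_of_lt_of_le (by positivity) ht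
  -- the truncated function g
  set g : EuclideanSpace ℝ (Fin d) → ℝ :=
    fun k => if k ∈ C then Real.exp ⟪q, k⟫ else Real.exp ⟪q, k₀⟫ with hgdef
  have hcont : Continuous fun k : EuclideanSpace ℝ (Fin d) => Real.exp ⟪q, k⟫ :=
    Real.continuous_exp.comp (continuous_const.inner continuous_id)
  have hmeasg : Measurable g :=
    Measurable.ite C.measurableSet hcont.measurable measurable_const
  have hg0 : ∀ k, 0 ≤ g k := by
    intro k; rw [hgdef]; dsimp only
    split <;> exact (Real.exp_pos _).le
  set B : ℝ := Real.exp (2 * δ * r) * μ0 with hBdef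
  have hB : 0 < B := mul_pos hexp2 hμ0
  -- upper bound on values within C
  have hub : ∀ k' ∈ C, Real.exp ⟪q, k'⟫ ≤ B := by
    intro k' hk'
    have hptw : ∀ k ∈ C, Real.exp ⟪q, k'⟫ ≤ Real.exp (2 * δ * r) * Real.exp ⟪q, k⟫ := by
      intro k hk
      rw [← Real.exp_add, Real.exp_le_exp]
      have h1 : ⟪q, k'⟫ - ⟪q, k⟫ = ⟪q, k' - k⟫ := by rw [inner_sub_right]
      have h2 : ⟪q, k' - k⟫ ≤ ‖q‖ * ‖k' - k‖ := real_inner_le_norm q _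
      have h3 : ‖k' - k‖ = dist k' k := (dist_eq_norm _ _).symm
      have h4 : ‖q‖ * ‖k' - k‖ ≤ r * (2 * δ) := by
        apply mul_le_mul hq _ (norm_nonneg _) hr.le
        rw [h3]; exact hdiam k' hk' k hk
      nlinarith
    have hsum := Finset.sum_le_sum hptw
    have hsum' : N * Real.exp ⟪q, k'⟫ ≤ Real.exp (2 * δ * r) * Z := by
      rw [hNdef, hZdef, Finset.mul_sum]
      simpa [Finset.sum_const, nsmul_eq_mul] using hsum
    rw [hBdef, hμ0def]
    rw [mul_div_assoc', le_div_iff₀ hN]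
    linarith
  have hgB : ∀ k, g k ≤ B := by
    intro k; rw [hgdef]; dsimp only
    split
    · next h => exact hub k h
    · exact hub k₀ hk₀
  -- the mean of g
  have hgint : Integrable g ν := by
    apply Integrable.mono' (integrable_const B) hmeasg.aestronglyMeasurable
    exact ae_of_all _ fun k => by
      rw [Real.norm_eq_abs, abs_of_nonneg (hg0 k)]; exact hgB k
  have hmean : ∫ k, g k ∂ν = μ0 := by
    rw [hνdef, PMF.integral_eq_tsum _ g (hνdef ▸ hgint)]
    rw [tsum_eq_sum (s := C) (by
      intro k hk
      rw [PMF.uniformOfFinset_apply]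
      simp [hk])]
    have hterm : ∀ k ∈ C, ((PMF.uniformOfFinset C hC) k).toReal • g k
        = N⁻¹ * Real.exp ⟪q, k⟫ := by
      intro k hk
      rw [PMF.uniformOfFinset_apply]
      simp only [hk, if_true, hgdef]
      rw [smul_eq_mul]
      congr 1
      · rw [ENNReal.toReal_inv]; simp [hNdef]
    rw [Finset.sum_congr rfl hterm, ← Finset.mul_sum, ← hZdef, hμ0def, inv_mul_eq_div]
  -- key numeric fact
  have hkey : Real.log (2/η) ≤ (t:ℝ) * ε^2 / (3 * Real.exp (2*δ*r)) := by
    rw [le_div_iff₀ (by positivity)]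
    have h := mul_le_mul_of_nonneg_right ht (sq_nonneg ε)
    have heq : 3 * ε⁻¹^2 * Real.exp (2*δ*r) * Real.log (2/η) * ε^2
        = Real.log (2/η) * (3 * Real.exp (2*δ*r)) := by
      field_simp
    rw [heq] at h
    linarith
  -- common exponent bound
  have hexpbound : ∀ c : ℝ, c ≤ -(ε^2/3) →
      Real.exp ((t:ℝ) * μ0 / B * c) ≤ η / 2 := by
    intro c hc
    have hKpos : 0 < (t:ℝ) * μ0 / B := div_pos (mul_pos htpos hμ0) hB
    have h1 : (t:ℝ) * μ0 / B * c ≤ (t:ℝ) * μ0 / B * (-(ε^2/3)) :=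
      mul_le_mul_of_nonneg_left hc hKpos.le
    have hKB : (t:ℝ) * μ0 / B = (t:ℝ) / Real.exp (2*δ*r) := by
      rw [hBdef]; rw [mul_comm (Real.exp (2*δ*r)) μ0, ← div_div, mul_div_assoc,
        div_self hμ0.ne', mul_one]
    have h2 : (t:ℝ) * μ0 / B * (-(ε^2/3)) ≤ -Real.log (2/η) := by
      rw [hKB]
      have heq2 : (t:ℝ) / Real.exp (2*δ*r) * (-(ε^2/3))
          = -((t:ℝ) * ε^2 / (3 * Real.exp (2*δ*r))) := by
        field_simp
      rw [heq2]
      linarith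
    calc Real.exp ((t:ℝ) * μ0 / B * c) ≤ Real.exp (-Real.log (2/η)) :=
      Real.exp_le_exp.2 (le_trans h1 h2)
    _ = η/2 := by
      rw [Real.exp_neg, Real.exp_log (by positivity), inv_div]
  -- upper tail
  set s1 : ℝ := Real.log (1+ε) / B with hs1def
  have hs1 : 0 ≤ s1 := div_nonneg (Real.log_nonneg (by linarith)) hB.le
  set τ1 : ℝ := (1+ε) * t * μ0 with hτ1def
  have hA1 := chernoff_aux ν t g hmeasg B hB hg0 hgB s1 τ1
  rw [hmean] at hA1
  have hs1B : s1 * B = Real.log (1+ε) := by rw [hs1def]; exact div_mul_cancel₀ _ hB.ne'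
  have harith1 : (t:ℝ) * (μ0 * (Real.exp (s1*B) - 1)/B) - s1*τ1
      = (t:ℝ) * μ0 / B * (ε - (1+ε) * Real.log (1+ε)) := by
    rw [hs1B, Real.exp_log (by linarith : (0:ℝ) < 1+ε), hτ1def, hs1def]
    ring
  have hA1' : P {x : Fin t → EuclideanSpace ℝ (Fin d) |
      Real.exp (s1*τ1) ≤ Real.exp (s1 * ∑ j, g (x j))} ≤ ENNReal.ofReal (η/2) := by
    refine le_trans hA1 (ENNReal.ofReal_le_ofReal ?_)
    rw [harith1]
    exact hexpbound _ (mul_log_lower ε ε0 ε1)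
  -- lower tail
  set s2 : ℝ := Real.log (1-ε) / B with hs2def
  have hs2 : s2 ≤ 0 :=
    div_nonpos_of_nonpos_of_nonneg (Real.log_nonpos (by linarith) (by linarith)) hB.le
  set τ2 : ℝ := (1-ε) * t * μ0 with hτ2def
  have hA2 := chernoff_aux ν t g hmeasg B hB hg0 hgB s2 τ2
  rw [hmean] at hA2
  have hs2B : s2 * B = Real.log (1-ε) := by rw [hs2def]; exact div_mul_cancel₀ _ hB.ne'
  have harith2 : (t:ℝ) * (μ0 * (Real.exp (s2*B) - 1)/B) - s2*τ2
      = (t:ℝ) * μ0 / B * (-ε - (1-ε) * Real.log (1-ε)) := by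
    rw [hs2B, Real.exp_log (by linarith : (0:ℝ) < 1-ε), hτ2def, hs2def]
    ring
  have hA2' : P {x : Fin t → EuclideanSpace ℝ (Fin d) |
      Real.exp (s2*τ2) ≤ Real.exp (s2 * ∑ j, g (x j))} ≤ ENNReal.ofReal (η/2) := by
    refine le_trans hA2 (ENNReal.ofReal_le_ofReal ?_)
    rw [harith2]
    exact hexpbound _ (mul_log_lower' ε ε0 ε1)
  clear_value ν P N Z μ0 g B s1 τ1 s2 τ2
  -- the good event for g
  have hSgmeas : Measurable fun x : Fin t → EuclideanSpace ℝ (Fin d) => ∑ j, g (x j) :=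
    Finset.measurable_sum Finset.univ fun j _ => hmeasg.comp (measurable_pi_apply j)
  set Egood := {x : Fin t → EuclideanSpace ℝ (Fin d) | |N / t * ∑ j, g (x j) - Z| ≤ ε * Z}
    with hEdef
  have hEmeas : MeasurableSet Egood :=
    measurableSet_le (((measurable_const.mul hSgmeas).sub measurable_const).abs)
      measurable_const
  have hincl : Egoodᶜ ⊆ {x : Fin t → EuclideanSpace ℝ (Fin d) |
        Real.exp (s1*τ1) ≤ Real.exp (s1 * ∑ j, g (x j))}
      ∪ {x : Fin t → EuclideanSpace ℝ (Fin d) |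
        Real.exp (s2*τ2) ≤ Real.exp (s2 * ∑ j, g (x j))} := by
    intro x hx
    simp only [Set.mem_compl_iff, hEdef, Set.mem_setOf_eq, not_le] at hx
    set W := ∑ j, g (x j) with hWdef
    rcases le_or_gt W ((1+ε) * t * μ0) with hcase|hcase
    · right
      simp only [Set.mem_setOf_eq, Real.exp_le_exp]
      rw [← hWdef]
      have hlow : W ≤ τ2 := by
        rcases abs_cases (N / t * W - Z) with ⟨he, _⟩|⟨he, _⟩
        · exfalso
          rw [he, hZN] at hx
          have hmm : N / t * W ≤ N / t * ((1+ε)*t*μ0) :=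
            mul_le_mul_of_nonneg_left hcase (div_nonneg hN.le htpos.le)
          have hNt : N / t * ((1+ε)*t*μ0) = (1+ε) * (N * μ0) := by
            field_simp
          rw [hNt] at hmm
          linarith
        · rw [he, hZN] at hx
          rw [hτ2def]
          have h5 : N / t * W = N * W / t := by ring
          have h6 : N * W / t < (1-ε) * (N * μ0) := by linarith
          rw [div_lt_iff₀ htpos] at h6
          have h7 : (1-ε) * (N * μ0) * (t:ℝ) = N * ((1-ε) * t * μ0) := by ring
          rw [h7] at h6
          exact le_of_lt ((mul_lt_mul_iff_right₀ hN).mp h6)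
      exact mul_le_mul_of_nonpos_left hlow hs2
    · left
      simp only [Set.mem_setOf_eq, Real.exp_le_exp]
      rw [← hWdef]
      rw [hτ1def]
      exact mul_le_mul_of_nonneg_left hcase.le hs1
  have hcompl : P Egoodᶜ ≤ ENNReal.ofReal η := by
    calc P Egoodᶜ ≤ P ({x : Fin t → EuclideanSpace ℝ (Fin d) |
        Real.exp (s1*τ1) ≤ Real.exp (s1 * ∑ j, g (x j))}
      ∪ {x : Fin t → EuclideanSpace ℝ (Fin d) |
        Real.exp (s2*τ2) ≤ Real.exp (s2 * ∑ j, g (x j))}) := measure_mono hincl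
    _ ≤ _ + _ := measure_union_le _ _
    _ ≤ ENNReal.ofReal (η/2) + ENNReal.ofReal (η/2) := add_le_add hA1' hA2'
    _ = ENNReal.ofReal η := by
        rw [← ENNReal.ofReal_add (by linarith) (by linarith)]
        norm_num
  have hEgoodlb : ENNReal.ofReal (1-η) ≤ P Egood := by
    have h1 : P Egoodᶜ = 1 - P Egood := prob_compl_eq_one_sub hEmeas
    have h2 : P Egood = 1 - P Egoodᶜ := by
      rw [h1, ENNReal.sub_sub_cancel ENNReal.one_ne_top prob_le_one]
    rw [h2]
    calc ENNReal.ofReal (1-η) = 1 - ENNReal.ofReal η := by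
          rw [ENNReal.ofReal_sub _ η0.le, ENNReal.ofReal_one]
    _ ≤ 1 - P Egoodᶜ := tsub_le_tsub_left hcompl 1
  -- null set of samples outside C
  have hDnull : P {x : Fin t → EuclideanSpace ℝ (Fin d) | ¬ ∀ j, x j ∈ C} = 0 := by
    have hset : {x : Fin t → EuclideanSpace ℝ (Fin d) | ¬ ∀ j, x j ∈ C}
        = ⋃ j, (fun x : Fin t → EuclideanSpace ℝ (Fin d) => x j) ⁻¹' (↑C : Set _)ᶜ := by
      ext x; simp [Set.mem_iUnion]
    rw [hPdef, hset]
    refine measure_iUnion_null fun j => Measure.pi_eval_preimage_null _ ?_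
    show ν ((↑C : Set (EuclideanSpace ℝ (Fin d)))ᶜ) = 0
    rw [hνdef]
    rw [PMF.toMeasure_apply_eq_zero_iff _ _]
    rw [PMF.support_uniformOfFinset]
    exact disjoint_compl_right
    exact C.measurableSet.compl
  -- transfer to the original event
  have hsub : Egood ⊆ {S : Fin t → EuclideanSpace ℝ (Fin d) |
        |N / t * ∑ j, Real.exp ⟪q, S j⟫ - Z| ≤ ε * Z}
      ∪ {x : Fin t → EuclideanSpace ℝ (Fin d) | ¬ ∀ j, x j ∈ C} := by
    intro x hx
    by_cases hxD : ∀ j, x j ∈ C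
    · left
      have hSeq : ∑ j, g (x j) = ∑ j, Real.exp ⟪q, x j⟫ :=
        Finset.sum_congr rfl fun j _ => by rw [hgdef]; simp [hxD j]
      rw [hEdef] at hx
      simp only [Set.mem_setOf_eq] at hx ⊢
      rw [← hSeq]
      exact hx
    · right; exact hxD
  calc ENNReal.ofReal (1-η) ≤ P Egood := hEgoodlb
  _ ≤ P ({S : Fin t → EuclideanSpace ℝ (Fin d) |
        |N / t * ∑ j, Real.exp ⟪q, S j⟫ - Z| ≤ ε * Z}
      ∪ {x : Fin t → EuclideanSpace ℝ (Fin d) | ¬ ∀ j, x j ∈ C}) := measure_mono hsub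
  _ ≤ P {S : Fin t → EuclideanSpace ℝ (Fin d) |
        |N / t * ∑ j, Real.exp ⟪q, S j⟫ - Z| ≤ ε * Z}
      + P {x : Fin t → EuclideanSpace ℝ (Fin d) | ¬ ∀ j, x j ∈ C} := measure_union_le _ _
  _ = P {S : Fin t → EuclideanSpace ℝ (Fin d) |
        |N / t * ∑ j, Real.exp ⟪q, S j⟫ - Z| ≤ ε * Z} := by rw [hDnull, add_zero]
end

section
/- Let T = Σ_{i=1}^{m} T_i where each T_i = Σ_{k ∈ C_i} exp(⟨q,k⟩), clusters C_i have diameter at most 2δ, and ||q||_2 ≤ r. If for each i, τ_i is the scaled empirical mean of exp(⟨q,·⟩) over t ≥ 3ε^{-2}e^{2δr}log(2m/η) i.i.d. uniform samples from C_i (scaled by |C_i|), then with probability at least 1-η, the total estimate τ = Σ_i τ_i satisfies |τ - T| ≤ εT. -/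
set_option maxHeartbeats 1000000

open scoped RealInnerProductSpace ENNReal
open MeasureTheory Finset ProbabilityTheory

section Helpers

variable {ι : Type*} [Fintype ι] {α : ι → Type*} [∀ i, MeasurableSpace (α i)]
  (μ : ∀ i, Measure (α i)) [∀ i, IsProbabilityMeasure (μ i)]

lemma my_pi_eval_preimage (i : ι) (s : Set (α i)) :
    Measure.pi μ ((fun x => x i) ⁻¹' s) = μ i s := by
  classical
  have h : (fun x : ∀ j, α j => x i) ⁻¹' s
      = Set.pi Set.univ (Function.update (fun j => (Set.univ : Set (α j))) i s) := by
    rw [← Set.eval_preimage]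
  rw [h, Measure.pi_pi,
    Finset.prod_eq_single i (fun j _ hj => by rw [Function.update_of_ne hj]; exact measure_univ)
      (fun hi => absurd (Finset.mem_univ i) hi), Function.update_self]

lemma my_iIndepFun_eval :
    iIndepFun (fun i (x : ∀ j, α j) => x i) (Measure.pi μ) := by
  classical
  rw [iIndepFun_iff_measure_inter_preimage_eq_mul]
  intro S sets hsets
  have h1 : (⋂ i ∈ S, (fun x : ∀ j, α j => x i) ⁻¹' sets i)
      = Set.pi Set.univ (fun i => if i ∈ S then sets i else Set.univ) := by
    ext x
    simp only [Set.mem_iInter, Set.mem_preimage, Set.mem_pi, Set.mem_univ, true_implies]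
    constructor
    · intro h i
      split_ifs with hi
      · exact h i hi
      · trivial
    · intro h i hi
      have := h i
      rwa [if_pos hi] at this
  rw [h1, Measure.pi_pi]
  calc (∏ j, μ j (if j ∈ S then sets j else Set.univ))
      = ∏ j, (if j ∈ S then μ j (sets j) else 1) := by
        refine Finset.prod_congr rfl fun j _ => ?_
        split_ifs <;> simp
    _ = ∏ j ∈ S, μ j (sets j) := by rw [Finset.prod_ite_mem, Finset.univ_inter]
    _ = ∏ j ∈ S, Measure.pi μ ((fun x : ∀ j, α j => x j) ⁻¹' sets j) := by
        refine Finset.prod_congr rfl fun j _ => (my_pi_eval_preimage μ j (sets j)).symm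

lemma my_pi_map_eval (i : ι) :
    (Measure.pi μ).map (fun x => x i) = μ i :=
  Measure.ext fun s hs => by
    rw [Measure.map_apply (measurable_pi_apply i) hs, my_pi_eval_preimage]

end Helpers

section Uniform

variable {α : Type*} [MeasurableSpace α] [MeasurableSingletonClass α]

lemma my_integrable_dirac (f : α → ℝ) (hf : Measurable f) (a : α) :
    Integrable f (Measure.dirac a) := by
  refine ⟨hf.aestronglyMeasurable, ?_⟩
  simp [HasFiniteIntegral, lintegral_dirac]

lemma my_uniform_toMeasure (s : Finset α) (hs : s.Nonempty) :
    (PMF.uniformOfFinset s hs).toMeasure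
      = (s.card : ℝ≥0∞)⁻¹ • ∑ k ∈ s, Measure.dirac k := by
  classical
  refine Measure.ext fun t ht => ?_
  rw [PMF.toMeasure_apply _ ht, Measure.smul_apply, Measure.finset_sum_apply]
  rw [tsum_eq_sum (s := s) (fun a ha => by
    simp [Set.indicator_apply, PMF.uniformOfFinset_apply, ha])]
  simp only [Measure.dirac_apply' _ ht, smul_eq_mul, Finset.mul_sum]
  refine Finset.sum_congr rfl fun a ha => ?_
  simp [Set.indicator_apply, PMF.uniformOfFinset_apply, ha]

lemma my_uniform_integral (s : Finset α) (hs : s.Nonempty) (f : α → ℝ) (hf : Measurable f) :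
    ∫ x, f x ∂(PMF.uniformOfFinset s hs).toMeasure = (s.card : ℝ)⁻¹ * ∑ k ∈ s, f k := by
  rw [my_uniform_toMeasure s hs, integral_smul_measure,
    integral_finset_sum_measure (fun k _ => my_integrable_dirac f hf k)]
  simp [integral_dirac, ENNReal.toReal_inv]

end Uniform

lemma my_exp_convex (u s : ℝ) (h0 : 0 ≤ s) (h1 : s ≤ 1) :
    Real.exp (u * s) ≤ 1 + s * (Real.exp u - 1) := by
  have h := convexOn_exp.2 (Set.mem_univ (0:ℝ)) (Set.mem_univ u)
    (by linarith : (0:ℝ) ≤ 1 - s) h0 (by ring)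
  simp only [smul_eq_mul, mul_zero, zero_add, Real.exp_zero, mul_one] at h
  calc Real.exp (u * s) = Real.exp (s * u) := by rw [mul_comm]
    _ ≤ (1 - s) * 1 + s * Real.exp u := by simpa using h
    _ = 1 + s * (Real.exp u - 1) := by ring

lemma my_up_ineq (ε : ℝ) (h0 : 0 < ε) (h1 : ε ≤ 1) :
    Real.exp (17 / 25 * ε) - 1 - 17 / 25 * ε * (1 + ε) ≤ -(ε ^ 2 / 3) := by
  have hx0 : (0:ℝ) ≤ 17 / 25 * ε := by positivity
  have hx1 : 17 / 25 * ε ≤ 1 := by linarith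
  have hb := Real.exp_bound' hx0 hx1 (n := 4) (by norm_num)
  rw [show (4:ℕ) = 3 + 1 from rfl] at hb
  simp [Finset.sum_range_succ, Nat.factorial] at hb
  norm_num at hb
  have h3 : ε ^ 3 ≤ ε ^ 2 := pow_le_pow_of_le_one h0.le h1 (by norm_num)
  have h4 : ε ^ 4 ≤ ε ^ 2 := pow_le_pow_of_le_one h0.le h1 (by norm_num)
  nlinarith [sq_nonneg ε]

lemma my_low_ineq (ε : ℝ) (h0 : 0 < ε) (h1 : ε ≤ 1) :
    Real.exp (-(2 / 3 * ε)) - 1 + 2 / 3 * ε * (1 - ε) ≤ -(ε ^ 2 / 3) := by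
  have hx : |(-(2 / 3 * ε))| ≤ 1 := by rw [abs_neg, abs_of_nonneg (by positivity)]; linarith
  have hb := Real.exp_bound hx (n := 2) (by norm_num)
  simp [Finset.sum_range_succ] at hb
  rw [abs_sub_le_iff] at hb
  norm_num at hb
  rw [abs_of_pos h0] at hb
  nlinarith [hb.1, sq_nonneg ε]

/-- Union-bound version of the per-cluster Chernoff estimate: the clusters
`C 1, ..., C m` are disjoint finite sets of vectors of diameter at most `2δ`, `‖q‖ ≤ r`,
and for each cluster `i` the estimate `τ_i` is the empirical mean of `exp⟨q,·⟩` over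
`t ≥ 3 ε⁻² e^{2δr} log(2m/η)` i.i.d. uniform samples from `C i`, scaled by `|C i|`;
samples across clusters are independent. Then with probability at least `1 - η` the
total estimate `τ = Σ_i τ_i` satisfies `|τ - T| ≤ ε·T` for
`T = Σ_i Σ_{k ∈ C i} exp⟨q,k⟩`. -/
theorem clustered_partition_function_estimate {d m t : ℕ} (δ r ε η : ℝ)
    (hδ : 0 < δ) (hr : 0 < r) (hε : ε ∈ Set.Ioo (0 : ℝ) 1) (hη : η ∈ Set.Ioo (0 : ℝ) 1)
    (C : Fin m → Finset (EuclideanSpace ℝ (Fin d))) (hC : ∀ i, (C i).Nonempty)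
    (hdisj : ∀ i j, i ≠ j → Disjoint (C i) (C j))
    (hdiam : ∀ i, ∀ k ∈ C i, ∀ k' ∈ C i, dist k k' ≤ 2 * δ)
    (q : EuclideanSpace ℝ (Fin d)) (hq : ‖q‖ ≤ r)
    (ht : 3 * ε⁻¹ ^ 2 * Real.exp (2 * δ * r) * Real.log (2 * m / η) ≤ (t : ℝ)) :
    ENNReal.ofReal (1 - η) ≤
      (Measure.pi fun p : Fin m × Fin t => (PMF.uniformOfFinset (C p.1) (hC p.1)).toMeasure)
        {S : Fin m × Fin t → EuclideanSpace ℝ (Fin d) |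
          |(∑ i, ((C i).card : ℝ) / (t : ℝ) * ∑ j, Real.exp ⟪q, S (i, j)⟫) -
              ∑ i, ∑ k ∈ C i, Real.exp ⟪q, k⟫| ≤
            ε * ∑ i, ∑ k ∈ C i, Real.exp ⟪q, k⟫} := by
  classical
  obtain ⟨hε0, hε1⟩ := hε
  obtain ⟨hη0, hη1⟩ := hη
  haveI hprob : ∀ p : Fin m × Fin t,
      IsProbabilityMeasure ((PMF.uniformOfFinset (C p.1) (hC p.1)).toMeasure) :=
    fun p => PMF.toMeasure.isProbabilityMeasure _
  set ν : Fin m × Fin t → Measure (EuclideanSpace ℝ (Fin d)) :=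
    fun p => (PMF.uniformOfFinset (C p.1) (hC p.1)).toMeasure with hνdef
  set P := Measure.pi ν with hPdef
  haveI : IsProbabilityMeasure P := Measure.pi.instIsProbabilityMeasure ν
  rcases Nat.eq_zero_or_pos m with hm | hm
  · subst hm
    have hA : {S : Fin 0 × Fin t → EuclideanSpace ℝ (Fin d) |
          |(∑ i, ((C i).card : ℝ) / (t : ℝ) * ∑ j, Real.exp ⟪q, S (i, j)⟫) -
              ∑ i, ∑ k ∈ C i, Real.exp ⟪q, k⟫| ≤
            ε * ∑ i, ∑ k ∈ C i, Real.exp ⟪q, k⟫} = Set.univ := by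
      ext S
      simp
    rw [hA, measure_univ]
    exact ENNReal.ofReal_le_one.mpr (by linarith)
  -- main case : 1 ≤ m
  have hm0 : (0:ℝ) < m := by exact_mod_cast hm
  have hm1 : (1:ℝ) ≤ m := by exact_mod_cast hm
  have hfrac1 : 1 < 2 * m / η := by
    rw [lt_div_iff₀ hη0]; nlinarith
  have hL : 0 < Real.log (2 * m / η) := Real.log_pos hfrac1
  have htR : (0:ℝ) < t :=
    lt_of_lt_of_le (mul_pos (by positivity) hL) ht
  have htR0 : (t:ℝ) ≠ 0 := ne_of_gt htR
  have hfmeas : Measurable (fun x : EuclideanSpace ℝ (Fin d) => Real.exp ⟪q, x⟫) :=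
    (Measurable.inner measurable_const measurable_id).exp
  set X : Fin m × Fin t → (Fin m × Fin t → EuclideanSpace ℝ (Fin d)) → ℝ :=
    fun p S => Real.exp ⟪q, S p⟫ with hXdef
  have hXmeas : ∀ p, Measurable (X p) := fun p => hfmeas.comp (measurable_pi_apply p)
  have hindep : iIndepFun X P :=
    (my_iIndepFun_eval ν).comp (fun _ => fun x => Real.exp ⟪q, x⟫) (fun _ => hfmeas)
  have hae : ∀ᵐ S ∂P, ∀ p : Fin m × Fin t, S p ∈ C p.1 := by
    rw [ae_all_iff]
    intro p
    have h0 : ∀ᵐ x ∂(ν p), x ∈ C p.1 := by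
      have hmeasC : MeasurableSet ((C p.1 : Set (EuclideanSpace ℝ (Fin d)))ᶜ) :=
        (C p.1).finite_toSet.measurableSet.compl
      have hz : (PMF.uniformOfFinset (C p.1) (hC p.1)).toMeasure
          ((C p.1 : Set (EuclideanSpace ℝ (Fin d)))ᶜ) = 0 := by
        rw [PMF.toMeasure_apply_eq_zero_iff _ hmeasC, PMF.support_uniformOfFinset]
        exact disjoint_compl_right
      rw [ae_iff]
      exact hz
    exact MeasureTheory.Measure.tendsto_eval_ae_ae.eventually h0
  have key : ∀ i : Fin m, ∃ G : Set (Fin m × Fin t → EuclideanSpace ℝ (Fin d)),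
      MeasurableSet G ∧ P G ≤ ENNReal.ofReal (η / m) ∧
      ∀ S ∉ G,
        |((C i).card : ℝ) / (t : ℝ) * ∑ j, Real.exp ⟪q, S (i, j)⟫ -
            ∑ k ∈ C i, Real.exp ⟪q, k⟫| ≤ ε * ∑ k ∈ C i, Real.exp ⟪q, k⟫ := by
    intro i
    obtain ⟨k₀, hk₀C, hk₀⟩ := Finset.exists_mem_eq_sup' (hC i)
      (fun k : EuclideanSpace ℝ (Fin d) => Real.exp ⟪q, k⟫)
    set b := Real.exp ⟪q, k₀⟫ with hbdef
    have hb0 : (0:ℝ) < b := Real.exp_pos _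
    have hfb : ∀ k ∈ C i, Real.exp ⟪q, k⟫ ≤ b := by
      intro k hk
      rw [← hk₀]
      exact Finset.le_sup' (f := fun k : EuclideanSpace ℝ (Fin d) => Real.exp ⟪q, k⟫) hk
    have hflow : ∀ k ∈ C i, b * Real.exp (-(2*δ*r)) ≤ Real.exp ⟪q, k⟫ := by
      intro k hk
      rw [hbdef, ← Real.exp_add]
      apply Real.exp_le_exp.2
      have h2 : ⟪q, k₀⟫ - ⟪q, k⟫ = ⟪q, k₀ - k⟫ := by
        rw [inner_sub_right]
      have h3 : ⟪q, k₀ - k⟫ ≤ ‖q‖ * ‖k₀ - k‖ := real_inner_le_norm q _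
      have h4 : ‖k₀ - k‖ = dist k₀ k := (dist_eq_norm _ _).symm
      have h5 : dist k₀ k ≤ 2*δ := hdiam i k₀ hk₀C k hk
      have h6 : ‖q‖ * ‖k₀ - k‖ ≤ r * (2*δ) := by
        apply mul_le_mul hq (by rw [h4]; exact h5) (norm_nonneg _) hr.le
      nlinarith [h2, h3, h6]
    set c := ((C i).card : ℝ) with hcdef
    have hc0 : (0:ℝ) < c := by
      rw [hcdef]; exact_mod_cast Finset.card_pos.2 (hC i)
    set Ti := ∑ k ∈ C i, Real.exp ⟪q, k⟫ with hTidef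
    have hTi0 : (0:ℝ) < Ti :=
      Finset.sum_pos (fun k _ => Real.exp_pos _) (hC i)
    set μi := Ti / c with hμidef
    have hμi0 : (0:ℝ) < μi := div_pos hTi0 hc0
    have hμlow : b * Real.exp (-(2*δ*r)) ≤ μi := by
      rw [hμidef, le_div_iff₀ hc0]
      calc b * Real.exp (-(2*δ*r)) * c
          = ∑ _k ∈ C i, b * Real.exp (-(2*δ*r)) := by
            rw [Finset.sum_const, nsmul_eq_mul, hcdef]; ring
        _ ≤ Ti := Finset.sum_le_sum (fun k hk => hflow k hk)
    set W : (Fin m × Fin t → EuclideanSpace ℝ (Fin d)) → ℝ :=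
      ∑ p ∈ ({i} ×ˢ (Finset.univ : Finset (Fin t))), X p with hWdef
    have hWfun : W = fun S => ∑ p ∈ ({i} ×ˢ (Finset.univ : Finset (Fin t))), X p S :=
      funext fun S => Finset.sum_apply _ _ _
    have hWapply : ∀ S, W S = ∑ j, Real.exp ⟪q, S (i, j)⟫ := by
      intro S
      calc W S = ∑ p ∈ ({i} ×ˢ (Finset.univ : Finset (Fin t))), X p S :=
            Finset.sum_apply _ _ _
        _ = ∑ a ∈ ({i} : Finset (Fin m)), ∑ j : Fin t, X (a, j) S := Finset.sum_product _ _ _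
        _ = ∑ j : Fin t, X (i, j) S := Finset.sum_singleton _ _
        _ = ∑ j, Real.exp ⟪q, S (i, j)⟫ := rfl
    have hWmeas : Measurable W := by
      rw [hWfun]
      exact Finset.measurable_sum _ (fun p _ => hXmeas p)
    have hWbound : ∀ᵐ S ∂P, W S ∈ Set.Icc 0 ((t:ℝ)*b) := by
      filter_upwards [hae] with S hS
      rw [hWapply S]
      constructor
      · exact Finset.sum_nonneg fun j _ => (Real.exp_pos _).le
      · calc (∑ j, Real.exp ⟪q, S (i, j)⟫) ≤ ∑ _j : Fin t, b :=
            Finset.sum_le_sum fun j _ => hfb _ (hS (i, j))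
          _ = (t:ℝ)*b := by
            rw [Finset.sum_const, nsmul_eq_mul, Finset.card_univ, Fintype.card_fin]
    have hInt : ∀ l : ℝ, Integrable (fun S => Real.exp (l * W S)) P := by
      intro l
      refine Integrable.mono' (integrable_const (Real.exp (|l| * ((t:ℝ)*b))))
        ((hWmeas.const_mul l).exp.aestronglyMeasurable) ?_
      filter_upwards [hWbound] with S hS
      rw [Real.norm_eq_abs, abs_of_pos (Real.exp_pos _)]
      apply Real.exp_le_exp.2
      calc l * W S ≤ |l| * W S := mul_le_mul_of_nonneg_right (le_abs_self l) hS.1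
        _ ≤ |l| * ((t:ℝ)*b) := mul_le_mul_of_nonneg_left hS.2 (abs_nonneg l)
    have hmgfX : ∀ (p : Fin m × Fin t) (l : ℝ), mgf (X p) P l
        = ((C p.1).card : ℝ)⁻¹ * ∑ k ∈ C p.1, Real.exp (l * Real.exp ⟪q, k⟫) := by
      intro p l
      have hg : Measurable (fun x : EuclideanSpace ℝ (Fin d) =>
          Real.exp (l * Real.exp ⟪q, x⟫)) := (hfmeas.const_mul l).exp
      have hmap := integral_map (μ := P) (φ := fun S => S p)
        (measurable_pi_apply p).aemeasurable
        (f := fun x => Real.exp (l * Real.exp ⟪q, x⟫)) hg.aestronglyMeasurable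
      calc mgf (X p) P l
          = ∫ x, Real.exp (l * Real.exp ⟪q, x⟫) ∂(P.map (fun S => S p)) := hmap.symm
        _ = ∫ x, Real.exp (l * Real.exp ⟪q, x⟫) ∂(ν p) := by rw [hPdef, my_pi_map_eval]
        _ = ((C p.1).card : ℝ)⁻¹ * ∑ k ∈ C p.1, Real.exp (l * Real.exp ⟪q, k⟫) :=
            my_uniform_integral _ _ _ hg
    have hmgfW : ∀ l : ℝ, mgf W P l
        = (c⁻¹ * ∑ k ∈ C i, Real.exp (l * Real.exp ⟪q, k⟫)) ^ t := by
      intro l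
      rw [hWdef, hindep.mgf_sum hXmeas ({i} ×ˢ (Finset.univ : Finset (Fin t)))]
      calc ∏ p ∈ ({i} ×ˢ (Finset.univ : Finset (Fin t))), mgf (X p) P l
          = ∏ a ∈ ({i} : Finset (Fin m)), ∏ j : Fin t, mgf (X (a, j)) P l :=
            Finset.prod_product _ _ _
        _ = ∏ j : Fin t, mgf (X (i, j)) P l := Finset.prod_singleton _ _
        _ = ∏ _j : Fin t, (c⁻¹ * ∑ k ∈ C i, Real.exp (l * Real.exp ⟪q, k⟫)) :=
            Finset.prod_congr rfl fun j _ => hmgfX (i, j) l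
        _ = (c⁻¹ * ∑ k ∈ C i, Real.exp (l * Real.exp ⟪q, k⟫)) ^ t := by
            rw [Finset.prod_const, Finset.card_univ, Fintype.card_fin]
    have hmgf_le : ∀ u : ℝ,
        c⁻¹ * ∑ k ∈ C i, Real.exp ((u/b) * Real.exp ⟪q, k⟫)
          ≤ Real.exp (μi / b * (Real.exp u - 1)) := by
      intro u
      have hsum : ∑ k ∈ C i, Real.exp ((u/b) * Real.exp ⟪q, k⟫)
          ≤ ∑ k ∈ C i, (1 + (Real.exp ⟪q, k⟫ / b) * (Real.exp u - 1)) := by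
        refine Finset.sum_le_sum fun k hk => ?_
        have h1 : (u/b) * Real.exp ⟪q, k⟫ = u * (Real.exp ⟪q, k⟫ / b) := by ring
        rw [h1]
        exact my_exp_convex u _ (by positivity) ((div_le_one hb0).2 (hfb k hk))
      have hsum2 : ∑ k ∈ C i, (1 + (Real.exp ⟪q, k⟫ / b) * (Real.exp u - 1))
          = c + (Ti / b) * (Real.exp u - 1) := by
        rw [Finset.sum_add_distrib, Finset.sum_const, nsmul_eq_mul, mul_one, hcdef,
          hTidef, ← Finset.sum_mul, ← Finset.sum_div]
      calc c⁻¹ * ∑ k ∈ C i, Real.exp ((u/b) * Real.exp ⟪q, k⟫)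
          ≤ c⁻¹ * (c + (Ti / b) * (Real.exp u - 1)) := by
            apply mul_le_mul_of_nonneg_left (hsum.trans_eq hsum2) (by positivity)
        _ = 1 + μi / b * (Real.exp u - 1) := by
            rw [hμidef]; field_simp; try ring
        _ ≤ Real.exp (μi / b * (Real.exp u - 1)) := by
            linarith [Real.add_one_le_exp (μi / b * (Real.exp u - 1))]
    have hexpL : Real.log (2*m/η) ≤ (t:ℝ) * μi / b * (ε^2/3) := by
      have h1 : 3 * ε⁻¹^2 * Real.exp (2*δ*r) * Real.log (2*m/η) * (ε^2/3)
          ≤ (t:ℝ) * (ε^2/3) := mul_le_mul_of_nonneg_right ht (by positivity)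
      have h2 : 3 * ε⁻¹^2 * Real.exp (2*δ*r) * Real.log (2*m/η) * (ε^2/3)
          = Real.exp (2*δ*r) * Real.log (2*m/η) := by
        field_simp
        try ring
      have h3 : Real.exp (-(2*δ*r)) ≤ μi / b := by
        rw [le_div_iff₀ hb0]
        calc Real.exp (-(2*δ*r)) * b = b * Real.exp (-(2*δ*r)) := by ring
          _ ≤ μi := hμlow
      calc Real.log (2*m/η)
          = Real.exp (2*δ*r) * Real.log (2*m/η) * Real.exp (-(2*δ*r)) := by
            rw [mul_comm (Real.exp (2*δ*r)) (Real.log (2*m/η)), mul_assoc,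
              ← Real.exp_add]
            simp
        _ ≤ Real.exp (2*δ*r) * Real.log (2*m/η) * (μi / b) := by
            apply mul_le_mul_of_nonneg_left h3 (by positivity)
        _ = 3 * ε⁻¹^2 * Real.exp (2*δ*r) * Real.log (2*m/η) * (ε^2/3) * (μi / b) := by
            rw [h2]
        _ ≤ (t:ℝ) * (ε^2/3) * (μi / b) := by
            apply mul_le_mul_of_nonneg_right h1 (by positivity)
        _ = (t:ℝ) * μi / b * (ε^2/3) := by ring
    have htail : Real.exp (-((t:ℝ) * μi / b * (ε^2/3))) ≤ η / (2*m) := by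
      calc Real.exp (-((t:ℝ) * μi / b * (ε^2/3)))
          ≤ Real.exp (-(Real.log (2*m/η))) := Real.exp_le_exp.2 (neg_le_neg hexpL)
        _ = (2*m/η)⁻¹ := by rw [Real.exp_neg, Real.exp_log (by positivity)]
        _ = η / (2*m) := by rw [inv_div]
    -- upper tail
    have hup : (P {S | (1+ε)*(t:ℝ)*μi ≤ W S}).toReal ≤ η / (2*m) := by
      have hl : (0:ℝ) ≤ (17/25*ε)/b := by positivity
      refine (measure_ge_le_exp_mul_mgf (μ := P) (X := W) ((1+ε)*(t:ℝ)*μi) hl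
        (hInt _)).trans ?_
      rw [hmgfW]
      have hbase : (0:ℝ) ≤ c⁻¹ * ∑ k ∈ C i, Real.exp (((17/25*ε)/b) * Real.exp ⟪q, k⟫) := by
        have : (0:ℝ) ≤ ∑ k ∈ C i, Real.exp (((17/25*ε)/b) * Real.exp ⟪q, k⟫) :=
          Finset.sum_nonneg fun k _ => (Real.exp_pos _).le
        positivity
      calc Real.exp (-((17/25*ε)/b) * ((1+ε)*(t:ℝ)*μi)) *
            (c⁻¹ * ∑ k ∈ C i, Real.exp (((17/25*ε)/b) * Real.exp ⟪q, k⟫)) ^ t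
          ≤ Real.exp (-((17/25*ε)/b) * ((1+ε)*(t:ℝ)*μi)) *
            (Real.exp (μi / b * (Real.exp (17/25*ε) - 1))) ^ t := by
            apply mul_le_mul_of_nonneg_left
              (pow_le_pow_left₀ hbase (hmgf_le (17/25*ε)) t) (Real.exp_pos _).le
        _ = Real.exp (-((17/25*ε)/b) * ((1+ε)*(t:ℝ)*μi) +
              (t:ℝ) * (μi / b * (Real.exp (17/25*ε) - 1))) := by
            rw [← Real.exp_nat_mul, ← Real.exp_add]
        _ ≤ Real.exp (-((t:ℝ) * μi / b * (ε^2/3))) := by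
            apply Real.exp_le_exp.2
            have hineq := my_up_ineq ε hε0 hε1.le
            have hcoef : (0:ℝ) ≤ (t:ℝ) * μi / b := by positivity
            calc -((17/25*ε)/b) * ((1+ε)*(t:ℝ)*μi) +
                  (t:ℝ) * (μi / b * (Real.exp (17/25*ε) - 1))
                = ((t:ℝ) * μi / b) *
                    (Real.exp (17/25*ε) - 1 - 17/25*ε*(1+ε)) := by ring
              _ ≤ ((t:ℝ) * μi / b) * (-(ε^2/3)) :=
                  mul_le_mul_of_nonneg_left hineq hcoef
              _ = -((t:ℝ) * μi / b * (ε^2/3)) := by ring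
        _ ≤ η / (2*m) := htail
    -- lower tail
    have hlo : (P {S | W S ≤ (1-ε)*(t:ℝ)*μi}).toReal ≤ η / (2*m) := by
      have hl : (-((2/3*ε)/b)) ≤ (0:ℝ) := by
        apply neg_nonpos_of_nonneg; positivity
      refine (measure_le_le_exp_mul_mgf (μ := P) (X := W) ((1-ε)*(t:ℝ)*μi) hl
        (hInt _)).trans ?_
      rw [hmgfW]
      have hneg : (-((2/3*ε)/b)) = (-(2/3*ε))/b := by ring
      have hbase : (0:ℝ) ≤ c⁻¹ * ∑ k ∈ C i, Real.exp ((-((2/3*ε)/b)) * Real.exp ⟪q, k⟫) := by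
        have : (0:ℝ) ≤ ∑ k ∈ C i, Real.exp ((-((2/3*ε)/b)) * Real.exp ⟪q, k⟫) :=
          Finset.sum_nonneg fun k _ => (Real.exp_pos _).le
        positivity
      have hmle : c⁻¹ * ∑ k ∈ C i, Real.exp ((-((2/3*ε)/b)) * Real.exp ⟪q, k⟫)
          ≤ Real.exp (μi / b * (Real.exp (-(2/3*ε)) - 1)) := by
        rw [hneg]
        exact hmgf_le (-(2/3*ε))
      calc Real.exp (-(-((2/3*ε)/b)) * ((1-ε)*(t:ℝ)*μi)) *
            (c⁻¹ * ∑ k ∈ C i, Real.exp ((-((2/3*ε)/b)) * Real.exp ⟪q, k⟫)) ^ t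
          ≤ Real.exp (-(-((2/3*ε)/b)) * ((1-ε)*(t:ℝ)*μi)) *
            (Real.exp (μi / b * (Real.exp (-(2/3*ε)) - 1))) ^ t := by
            apply mul_le_mul_of_nonneg_left
              (pow_le_pow_left₀ hbase hmle t) (Real.exp_pos _).le
        _ = Real.exp (-(-((2/3*ε)/b)) * ((1-ε)*(t:ℝ)*μi) +
              (t:ℝ) * (μi / b * (Real.exp (-(2/3*ε)) - 1))) := by
            rw [← Real.exp_nat_mul, ← Real.exp_add]
        _ ≤ Real.exp (-((t:ℝ) * μi / b * (ε^2/3))) := by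
            apply Real.exp_le_exp.2
            have hineq := my_low_ineq ε hε0 hε1.le
            have hcoef : (0:ℝ) ≤ (t:ℝ) * μi / b := by positivity
            calc -(-((2/3*ε)/b)) * ((1-ε)*(t:ℝ)*μi) +
                  (t:ℝ) * (μi / b * (Real.exp (-(2/3*ε)) - 1))
                = ((t:ℝ) * μi / b) *
                    (Real.exp (-(2/3*ε)) - 1 + 2/3*ε*(1-ε)) := by ring
              _ ≤ ((t:ℝ) * μi / b) * (-(ε^2/3)) :=
                  mul_le_mul_of_nonneg_left hineq hcoef
              _ = -((t:ℝ) * μi / b * (ε^2/3)) := by ring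
        _ ≤ η / (2*m) := htail
    have hUm : MeasurableSet {S | (1+ε)*(t:ℝ)*μi ≤ W S} :=
      measurableSet_le measurable_const hWmeas
    have hLm : MeasurableSet {S | W S ≤ (1-ε)*(t:ℝ)*μi} :=
      measurableSet_le hWmeas measurable_const
    refine ⟨{S | (1+ε)*(t:ℝ)*μi ≤ W S} ∪ {S | W S ≤ (1-ε)*(t:ℝ)*μi},
      hUm.union hLm, ?_, ?_⟩
    · calc P ({S | (1+ε)*(t:ℝ)*μi ≤ W S} ∪ {S | W S ≤ (1-ε)*(t:ℝ)*μi})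
          ≤ P {S | (1+ε)*(t:ℝ)*μi ≤ W S} + P {S | W S ≤ (1-ε)*(t:ℝ)*μi} :=
            measure_union_le _ _
        _ ≤ ENNReal.ofReal (η/(2*m)) + ENNReal.ofReal (η/(2*m)) := by
            apply add_le_add
            · rw [← ENNReal.ofReal_toReal (measure_ne_top P _)]
              exact ENNReal.ofReal_le_ofReal hup
            · rw [← ENNReal.ofReal_toReal (measure_ne_top P _)]
              exact ENNReal.ofReal_le_ofReal hlo
        _ = ENNReal.ofReal (η / m) := by
            rw [← ENNReal.ofReal_add (by positivity) (by positivity)]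
            congr 1
            field_simp
            try ring
    · intro S hS
      simp only [Set.mem_union, Set.mem_setOf_eq, not_or, not_le] at hS
      obtain ⟨h1, h2⟩ := hS
      rw [show (∑ j, Real.exp ⟪q, S (i, j)⟫) = W S from (hWapply S).symm]
      have he1 : c/(t:ℝ) * ((1+ε)*(t:ℝ)*μi) = (1+ε)*Ti := by
        rw [hμidef]; field_simp; try ring
      have he2 : c/(t:ℝ) * ((1-ε)*(t:ℝ)*μi) = (1-ε)*Ti := by
        rw [hμidef]; field_simp; try ring
      have hct : (0:ℝ) < c/(t:ℝ) := by positivity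
      have hlt1 : c/(t:ℝ) * W S < (1+ε)*Ti := by
        rw [← he1]; exact mul_lt_mul_of_pos_left h1 hct
      have hlt2 : (1-ε)*Ti < c/(t:ℝ) * W S := by
        rw [← he2]; exact mul_lt_mul_of_pos_left h2 hct
      rw [abs_le]
      constructor <;> nlinarith
  choose G hGmeas hGle hGout using key
  have hcup : P (⋃ i, G i) ≤ ENNReal.ofReal η := by
    calc P (⋃ i, G i) ≤ ∑' i, P (G i) := measure_iUnion_le _
      _ = ∑ i, P (G i) := tsum_fintype _
      _ ≤ ∑ _i : Fin m, ENNReal.ofReal (η/m) := Finset.sum_le_sum fun i _ => hGle i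
      _ = (m : ℝ≥0∞) * ENNReal.ofReal (η/m) := by
          rw [Finset.sum_const, Finset.card_univ, Fintype.card_fin, nsmul_eq_mul]
      _ = ENNReal.ofReal η := by
          rw [← ENNReal.ofReal_natCast m, ← ENNReal.ofReal_mul (Nat.cast_nonneg m)]
          congr 1
          field_simp
  calc ENNReal.ofReal (1-η) = 1 - ENNReal.ofReal η := by
        rw [← ENNReal.ofReal_one, ← ENNReal.ofReal_sub _ hη0.le]
    _ ≤ 1 - P (⋃ i, G i) := tsub_le_tsub_left hcup 1
    _ = P ((⋃ i, G i)ᶜ) := by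
        rw [measure_compl (MeasurableSet.iUnion hGmeas) (measure_ne_top _ _),
          measure_univ]
    _ ≤ P {S : Fin m × Fin t → EuclideanSpace ℝ (Fin d) |
          |(∑ i, ((C i).card : ℝ) / (t : ℝ) * ∑ j, Real.exp ⟪q, S (i, j)⟫) -
              ∑ i, ∑ k ∈ C i, Real.exp ⟪q, k⟫| ≤
            ε * ∑ i, ∑ k ∈ C i, Real.exp ⟪q, k⟫} := by
        apply measure_mono
        intro S hS
        simp only [Set.mem_compl_iff, Set.mem_iUnion, not_exists] at hS
        simp only [Set.mem_setOf_eq]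
        calc |(∑ i, ((C i).card : ℝ) / (t : ℝ) * ∑ j, Real.exp ⟪q, S (i, j)⟫) -
              ∑ i, ∑ k ∈ C i, Real.exp ⟪q, k⟫|
            = |∑ i, (((C i).card : ℝ) / (t : ℝ) * (∑ j, Real.exp ⟪q, S (i, j)⟫) -
                ∑ k ∈ C i, Real.exp ⟪q, k⟫)| := by rw [Finset.sum_sub_distrib]
          _ ≤ ∑ i, |((C i).card : ℝ) / (t : ℝ) * (∑ j, Real.exp ⟪q, S (i, j)⟫) -
                ∑ k ∈ C i, Real.exp ⟪q, k⟫| := Finset.abs_sum_le_sum_abs _ _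
          _ ≤ ∑ i, ε * ∑ k ∈ C i, Real.exp ⟪q, k⟫ :=
              Finset.sum_le_sum fun i _ => hGout i S (hS i)
          _ = ε * ∑ i, ∑ k ∈ C i, Real.exp ⟪q, k⟫ := by rw [Finset.mul_sum]
end
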